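/- Let λ > 0 and let g ~ N(0,1). Let D = {(2k−1)λ : k ∈ ℤ} be the set of discontinuities of the modulo function m_λ. Then for every t ∈ (0, λ/2), P(dist(g, D) ≤ t) ≤ √(8/π)·t·exp(−λ²/8)/(1 − exp(−λ²/8)). -/
import Mathlib

open MeasureTheory ProbabilityTheory
open scoped NNReal ENNReal

set_option maxHeartbeats 2000000 in
theorem stmt8 (lam t : ℝ) (hlam : 0 < lam) (ht0 : 0 < t) (ht : t < lam / 2) :
    (gaussianReal 0 1)
        {v : ℝ | Metric.infDist v {x : ℝ | ∃ k : ℤ, x = (2 * k - 1) * lam} ≤ t} ≤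
      ENNReal.ofReal (Real.sqrt (8 / Real.pi) * t * Real.exp (-lam ^ 2 / 8) /
        (1 - Real.exp (-lam ^ 2 / 8))) := by
  have hpi : (0:ℝ) < Real.pi := Real.pi_pos
  set r : ℝ := Real.exp (-lam ^ 2 / 8) with hrdef
  have hr0 : 0 < r := Real.exp_pos _
  have hr1 : r < 1 := by
    rw [hrdef, Real.exp_lt_one_iff]; nlinarith
  set a : ℝ := 2 * t * (Real.sqrt (2 * Real.pi))⁻¹ with hadef
  have hsqrt : (0:ℝ) < Real.sqrt (2 * Real.pi) := Real.sqrt_pos.2 (by positivity)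
  have ha0 : 0 < a := by positivity
  set D : Set ℝ := {x : ℝ | ∃ k : ℤ, x = (2 * k - 1) * lam} with hDdef
  -- D is closed
  have hDclosed : IsClosed D := by
    have hD : D = (fun x : ℝ => x / (2 * lam) + 1 / 2) ⁻¹'
        (Set.range (Int.cast : ℤ → ℝ)) := by
      ext x
      simp only [hDdef, Set.mem_setOf_eq, Set.mem_preimage, Set.mem_range]
      constructor
      · rintro ⟨k, rfl⟩
        exact ⟨k, by field_simp; ring⟩
      · rintro ⟨k, hk⟩
        refine ⟨k, ?_⟩
        have h2 : x / (2 * lam) = (k : ℝ) - 1/2 := by linarith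
        have : x = ((k:ℝ) - 1/2) * (2 * lam) := by
          field_simp at h2 ⊢; linarith
        rw [this]; ring
    rw [hD]
    exact Int.isClosedEmbedding_coe_real.isClosed_range.preimage (by continuity)
  have hDne : D.Nonempty := ⟨lam, 1, by push_cast; ring⟩
  -- subset of union of balls
  have hsub : {v : ℝ | Metric.infDist v D ≤ t} ⊆
      ⋃ k : ℤ, Metric.closedBall ((2 * k - 1) * lam) t := by
    intro v hv
    obtain ⟨y, hyD, hy⟩ := hDclosed.exists_infDist_eq_dist hDne v
    obtain ⟨k, rfl⟩ := hyD
    refine Set.mem_iUnion.2 ⟨k, ?_⟩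
    rw [Metric.mem_closedBall]
    rw [Set.mem_setOf_eq, hy] at hv
    exact hv
  -- per-ball bound
  have key : ∀ k : ℤ, (gaussianReal 0 1) (Metric.closedBall ((2 * k - 1) * lam) t) ≤
      ENNReal.ofReal (a * r ^ (max k (1 - k)).toNat) := by
    intro k
    set m : ℕ := (max k (1 - k)).toNat with hmdef
    have hm1 : 1 ≤ m := by
      rcases le_or_gt 1 k with h | h
      · rw [hmdef, max_eq_left (by omega)]; omega
      · rw [hmdef, max_eq_right (by omega)]; omega
    have habs : |(2 * (k:ℝ) - 1) * lam| = (2 * (m:ℝ) - 1) * lam := by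
      rcases le_or_gt 1 k with hk | hk
      · have hmk : (m:ℤ) = k := by rw [hmdef, max_eq_left (by omega)]; omega
        have hmk' : (m:ℝ) = (k:ℝ) := by exact_mod_cast hmk
        rw [hmk', abs_of_nonneg]
        have : (1:ℝ) ≤ (k:ℝ) := by exact_mod_cast hk
        nlinarith
      · have hk0 : k ≤ 0 := by omega
        have hmk : (m:ℤ) = 1 - k := by rw [hmdef, max_eq_right (by omega)]; omega
        have hmk' : (m:ℝ) = 1 - (k:ℝ) := by exact_mod_cast hmk
        have hkr : (k:ℝ) ≤ 0 := by exact_mod_cast hk0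
        rw [abs_of_nonpos (by nlinarith)]
        rw [hmk']; ring
    -- pointwise density bound on the ball
    have hpt : ∀ x ∈ Metric.closedBall ((2 * (k:ℝ) - 1) * lam) t,
        gaussianPDF 0 1 x ≤ ENNReal.ofReal ((Real.sqrt (2 * Real.pi))⁻¹ * r ^ m) := by
      intro x hx
      rw [Metric.mem_closedBall] at hx
      have hxabs : (2 * (m:ℝ) - 1) * lam - t ≤ |x| := by
        have h1 : |(2 * (k:ℝ) - 1) * lam| - |x| ≤ |(2 * (k:ℝ) - 1) * lam - x| :=
          abs_sub_abs_le_abs_sub _ _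
        rw [habs] at h1
        rw [Real.dist_eq, abs_sub_comm] at hx
        linarith
      have hm1' : (1:ℝ) ≤ (m:ℝ) := by exact_mod_cast hm1
      have hb0 : (0:ℝ) < (2 * (m:ℝ) - 1) * lam - lam / 2 := by nlinarith
      have hxb : (2 * (m:ℝ) - 1) * lam - lam / 2 ≤ |x| := by linarith
      have hfac : (0:ℝ) ≤ ((m:ℝ) - 1) * (16 * (m:ℝ) - 9) * lam ^ 2 :=
        mul_nonneg (mul_nonneg (by linarith) (by linarith)) (sq_nonneg lam)
      have hx2 : (m:ℝ) * lam ^ 2 / 4 ≤ x ^ 2 := by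
        have h1 : ((2 * (m:ℝ) - 1) * lam - lam / 2) ^ 2 ≤ |x| ^ 2 := by
          have := abs_nonneg x
          nlinarith
        rw [sq_abs] at h1
        nlinarith
      have hexp : Real.exp (- (x - 0) ^ 2 / (2 * ((1:ℝ≥0):ℝ))) ≤ r ^ m := by
        have hrm : r ^ m = Real.exp ((m:ℝ) * (-lam ^ 2 / 8)) := by
          rw [hrdef, ← Real.exp_nat_mul]
        rw [hrm]
        apply Real.exp_le_exp.2
        rw [NNReal.coe_one]
        rw [sub_zero]
        nlinarith
      rw [gaussianPDF]
      apply ENNReal.ofReal_le_ofReal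
      rw [gaussianPDFReal]
      have h2 : Real.sqrt (2 * Real.pi * ((1:ℝ≥0):ℝ)) = Real.sqrt (2 * Real.pi) := by
        rw [NNReal.coe_one, mul_one]
      rw [h2]
      exact mul_le_mul_of_nonneg_left hexp (by positivity)
    rw [show ((2:ℝ) * (k:ℤ) - 1) * lam = (2 * ((k:ℤ):ℝ) - 1) * lam by norm_num,
      gaussianReal_apply 0 one_ne_zero]
    calc ∫⁻ x in Metric.closedBall ((2 * ((k:ℤ):ℝ) - 1) * lam) t, gaussianPDF 0 1 x
        ≤ ∫⁻ _ in Metric.closedBall ((2 * ((k:ℤ):ℝ) - 1) * lam) t,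
            ENNReal.ofReal ((Real.sqrt (2 * Real.pi))⁻¹ * r ^ m) :=
          setLIntegral_mono measurable_const hpt
      _ = ENNReal.ofReal ((Real.sqrt (2 * Real.pi))⁻¹ * r ^ m) *
            volume (Metric.closedBall ((2 * ((k:ℤ):ℝ) - 1) * lam) t) := setLIntegral_const _ _
      _ = ENNReal.ofReal ((Real.sqrt (2 * Real.pi))⁻¹ * r ^ m) * ENNReal.ofReal (2 * t) := by
          rw [Real.volume_closedBall]
      _ = ENNReal.ofReal (a * r ^ m) := by
          rw [← ENNReal.ofReal_mul (by positivity)]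
          congr 1
          rw [hadef]; ring
  -- sum up
  have hsum : ∑' k : ℤ, ENNReal.ofReal (a * r ^ (max k (1 - k)).toNat) ≤
      ENNReal.ofReal (Real.sqrt (8 / Real.pi) * t * r / (1 - r)) := by
    set f : ℤ → ℝ≥0∞ := fun k => ENNReal.ofReal (a * r ^ (max k (1 - k)).toNat) with hfdef
    have hsplit : ∑' k : ℤ, f k = (∑' n : ℕ, f n) + ∑' n : ℕ, f (-(n + 1)) :=
      tsum_of_nat_of_neg_add_one ENNReal.summable ENNReal.summable
    have hgeom : Summable (fun n : ℕ => r ^ n) := summable_geometric_of_lt_one hr0.le hr1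
    have hgeosum : ∑' n : ℕ, r ^ n = (1 - r)⁻¹ := tsum_geometric_of_lt_one hr0.le hr1
    have hS2 : ∑' n : ℕ, f (-(n + 1)) = ENNReal.ofReal (a * r ^ 2 / (1 - r)) := by
      have heq : ∀ n : ℕ, f (-(n + 1)) = ENNReal.ofReal (a * r ^ 2 * r ^ n) := by
        intro n
        have h1 : max (-((n:ℤ) + 1)) (1 - -((n:ℤ) + 1)) = (n:ℤ) + 2 := by
          rw [max_eq_right (by omega)]; ring
        have h2 : ((n:ℤ) + 2).toNat = n + 2 := by omega
        simp only [hfdef, h1, h2]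
        congr 1
        ring
      rw [tsum_congr heq, ← ENNReal.ofReal_tsum_of_nonneg
        (fun n => by positivity) (hgeom.mul_left _)]
      congr 1
      rw [tsum_mul_left, hgeosum, div_eq_mul_inv]
    have hS1 : ∑' n : ℕ, f n = ENNReal.ofReal (a * r) + ENNReal.ofReal (a * r / (1 - r)) := by
      rw [tsum_eq_zero_add' ENNReal.summable]
      congr 1
      · simp only [hfdef]
        norm_num
      · have heq : ∀ n : ℕ, f ((n : ℕ) + 1 : ℕ) = ENNReal.ofReal (a * r * r ^ n) := by
          intro n
          have h1 : max ((n:ℤ) + 1) (1 - ((n:ℤ) + 1)) = (n:ℤ) + 1 := by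
            rw [max_eq_left (by omega)]
          have h2 : ((n:ℤ) + 1).toNat = n + 1 := by omega
          simp only [hfdef]
          push_cast
          rw [h1, h2]
          congr 1
          ring
        rw [tsum_congr heq, ← ENNReal.ofReal_tsum_of_nonneg
          (fun n => by positivity) (hgeom.mul_left _)]
        congr 1
        rw [tsum_mul_left, hgeosum, div_eq_mul_inv]
    have h1r : (0:ℝ) < 1 - r := by linarith
    have hcomb : ENNReal.ofReal (a * r + a * r / (1 - r) + a * r ^ 2 / (1 - r))
        = (ENNReal.ofReal (a * r) + ENNReal.ofReal (a * r / (1 - r)))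
          + ENNReal.ofReal (a * r ^ 2 / (1 - r)) := by
      rw [ENNReal.ofReal_add (add_nonneg (by positivity) (div_nonneg (by positivity) h1r.le))
          (div_nonneg (by positivity) h1r.le),
        ENNReal.ofReal_add (by positivity) (div_nonneg (by positivity) h1r.le)]
    rw [hsplit, hS1, hS2, ← hcomb]
    apply ENNReal.ofReal_le_ofReal
    have hkey : Real.sqrt (8 / Real.pi) * Real.sqrt (2 * Real.pi) = 4 := by
      rw [← Real.sqrt_mul (by positivity)]
      rw [show 8 / Real.pi * (2 * Real.pi) = 16 by field_simp; ring]
      rw [show (16:ℝ) = 4 ^ 2 by norm_num, Real.sqrt_sq (by norm_num)]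
    have h1r' : (1:ℝ) - r ≠ 0 := ne_of_gt h1r
    have hsne : Real.sqrt (2 * Real.pi) ≠ 0 := ne_of_gt hsqrt
    have hs8 : Real.sqrt (8 / Real.pi) = 4 * (Real.sqrt (2 * Real.pi))⁻¹ := by
      rw [(eq_div_iff hsne).mpr hkey, div_eq_mul_inv]
    apply le_of_eq
    rw [hs8, hadef]
    field_simp
    ring
  calc (gaussianReal 0 1) {v : ℝ | Metric.infDist v D ≤ t}
      ≤ (gaussianReal 0 1) (⋃ k : ℤ, Metric.closedBall ((2 * k - 1) * lam) t) :=
        measure_mono hsub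
    _ ≤ ∑' k : ℤ, (gaussianReal 0 1) (Metric.closedBall ((2 * k - 1) * lam) t) :=
        measure_iUnion_le _
    _ ≤ ∑' k : ℤ, ENNReal.ofReal (a * r ^ (max k (1 - k)).toNat) :=
        ENNReal.tsum_le_tsum key
    _ ≤ _ := hsum
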